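/- Let n ≥ 3 be odd and let G = Z/nZ. Let S1 = 0^{n−2}·1·(−1) (the sequence consisting of n−2 copies of 0, one copy of 1, and one copy of −1) and let S2 = 0·1·2⋯(n−1) (the sequence containing each element of G exactly once). Then σ(S1) = σ(S2) = 0 and 0 ∉ S1·S2. -/

import Mathlib

/-- The weighted product set `S · T` of two sequences (multisets) over a commutative ring. -/
def wProd {G : Type*} [CommRing G] (S T : Multiset G) : Set G :=
  { g | ∃ l1 l2 : List G, (l1 : Multiset G) = S ∧ (l2 : Multiset G) = T ∧
      (List.zipWith (· * ·) l1 l2).sum = g }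

private lemma zip_sum {R : Type*} [CommRing R] :
    ∀ (l1 l2 : List R) (m : ℕ), l1.length = m → l2.length = m →
      (List.zipWith (· * ·) l1 l2).sum = ∑ i ∈ Finset.range m, l1.getD i 0 * l2.getD i 0 := by
  intro l1
  induction l1 with
  | nil => intro l2 m h1 h2; simp [← h1]
  | cons a t ih =>
    intro l2 m h1 h2
    cases l2 with
    | nil => simp at h1 h2; omega
    | cons b t2 =>
      simp only [List.length_cons] at h1 h2
      obtain ⟨m', rfl⟩ : ∃ m', m = m' + 1 := ⟨t.length, by omega⟩
      rw [Finset.sum_range_succ']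
      simp only [List.zipWith_cons_cons, List.sum_cons, List.getD_cons_succ,
        List.getD_cons_zero]
      rw [ih t2 m' (by omega) (by omega)]
      ring

theorem stmt6 (n : ℕ) (hn : 3 ≤ n) (hodd : Odd n)
    (S1 S2 : Multiset (ZMod n))
    (hS1 : S1 = Multiset.replicate (n - 2) (0 : ZMod n) + {1, -1})
    (hS2 : S2 = (Multiset.range n).map (fun i => (i : ZMod n))) :
    S1.sum = 0 ∧ S2.sum = 0 ∧ (0 : ZMod n) ∉ wProd S1 S2 := by
  haveI : NeZero n := ⟨by omega⟩
  have hS2' : S2 = (Multiset.range n).map (fun i : ℕ => (i : ZMod n)) := by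
    rw [hS2]
    simp only [Multiset.map_id']
    show (Multiset.range n).bind (fun a => {(a : ZMod n)}) = _
    rw [Multiset.bind_singleton]
  clear hS2
  have h2ne : (2 : ZMod n) ≠ 0 := by
    intro h
    have hd : (n : ℕ) ∣ 2 := (ZMod.natCast_eq_zero_iff 2 n).mp (by exact_mod_cast h)
    exact absurd (Nat.le_of_dvd (by norm_num) hd) (by omega)
  have hne1 : (1 : ZMod n) ≠ -1 := by
    intro h; exact h2ne (by linear_combination h)
  have h1ne0 : (1 : ZMod n) ≠ 0 := by
    intro h; exact h2ne (by linear_combination 2 * h)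
  have hm1ne0 : (-1 : ZMod n) ≠ 0 := by
    intro h; exact h2ne (by linear_combination (-2) * h)
  refine ⟨?_, ?_, ?_⟩
  · simp [hS1]
  · rw [hS2']
    have h1 : ((Multiset.range n).map (fun i : ℕ => (i : ZMod n))).sum
        = ((∑ i ∈ Finset.range n, i : ℕ) : ZMod n) := by
      rw [Nat.cast_sum]
      rfl
    rw [h1, Finset.sum_range_id]
    obtain ⟨k, hk⟩ := hodd
    have h3 : n * (n - 1) / 2 = n * k := by
      rw [show n - 1 = 2 * k from by omega, show n * (2 * k) = 2 * (n * k) from by ring,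
        Nat.mul_div_cancel_left _ (by norm_num)]
    rw [h3]
    push_cast
    simp
  · rintro ⟨l1, l2, h1, h2, hsum⟩
    have hlen1 : l1.length = n := by
      have := congrArg Multiset.card h1
      simp [hS1, Multiset.card_replicate] at this
      omega
    have hlen2 : l2.length = n := by
      have := congrArg Multiset.card h2
      simpa [hS2'] using this
    have hnd : l2.Nodup := by
      rw [← Multiset.coe_nodup, h2, hS2']
      refine Multiset.Nodup.map_on ?_ (Multiset.nodup_range n)
      intro i hi j hj hij
      rw [Multiset.mem_range] at hi hj
      have : (i : ZMod n).val = (j : ZMod n).val := by rw [hij]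
      rwa [ZMod.val_natCast_of_lt hi, ZMod.val_natCast_of_lt hj] at this
    have h0ne1 : (0 : ZMod n) ≠ 1 := Ne.symm h1ne0
    have h0nem1 : (0 : ZMod n) ≠ -1 := Ne.symm hm1ne0
    have hne1' : (-1 : ZMod n) ≠ 1 := Ne.symm hne1
    have hc1 : l1.count (1 : ZMod n) = 1 := by
      have := congrArg (Multiset.count (1 : ZMod n)) h1
      rw [hS1] at this
      simpa [Multiset.count_replicate, h1ne0, h0ne1, hne1, hne1'] using this
    have hcm1 : l1.count (-1 : ZMod n) = 1 := by
      have := congrArg (Multiset.count (-1 : ZMod n)) h1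
      rw [hS1] at this
      simpa [Multiset.count_replicate, hm1ne0, h0nem1, hne1, hne1'] using this
    have hmem : ∀ x ∈ l1, x = 0 ∨ x = 1 ∨ x = -1 := by
      intro x hx
      have : x ∈ S1 := by rw [← h1]; exact_mod_cast hx
      rw [hS1] at this
      simp only [Multiset.mem_add, Multiset.mem_replicate, Multiset.insert_eq_cons,
        Multiset.mem_cons, Multiset.mem_singleton] at this
      tauto
    obtain ⟨i, hi⟩ : ∃ i : Fin l1.length, l1.get i = 1 := by
      rw [← List.mem_iff_get]
      exact List.count_pos_iff.mp (by omega)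
    obtain ⟨j, hj⟩ : ∃ j : Fin l1.length, l1.get j = -1 := by
      rw [← List.mem_iff_get]
      exact List.count_pos_iff.mp (by omega)
    have hij : i ≠ j := by
      intro h; rw [h, hj] at hi; exact hne1 hi.symm
    have huniq : ∀ k : Fin l1.length, k ≠ i → k ≠ j → l1.get k = 0 := by
      intro k hki hkj
      rcases hmem (l1.get k) (l1.get_mem _) with h | h | h
      · exact h
      · exfalso
        have hdup : l1.Duplicate (1 : ZMod n) := by
          rw [List.duplicate_iff_exists_distinct_get]
          rcases lt_or_gt_of_ne (fun he : k = i => hki he) with hlt | hlt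
          · exact ⟨k, i, hlt, h.symm, hi.symm⟩
          · exact ⟨i, k, hlt, hi.symm, h.symm⟩
        have := List.duplicate_iff_two_le_count.mp hdup
        omega
      · exfalso
        have hdup : l1.Duplicate (-1 : ZMod n) := by
          rw [List.duplicate_iff_exists_distinct_get]
          rcases lt_or_gt_of_ne (fun he : k = j => hkj he) with hlt | hlt
          · exact ⟨k, j, hlt, h.symm, hj.symm⟩
          · exact ⟨j, k, hlt, hj.symm, h.symm⟩
        have := List.duplicate_iff_two_le_count.mp hdup
        omega
    rw [zip_sum l1 l2 n hlen1 hlen2] at hsum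
    set f : ℕ → ZMod n := fun k => l1.getD k 0 * l2.getD k 0 with hf
    have hi' := i.isLt
    have hj' := j.isLt
    have hfi : f (i : ℕ) = l2.getD (i : ℕ) 0 := by
      simp [hf, List.getD_eq_getElem l1 0 i.isLt, ← List.get_eq_getElem, hi]
    have hfj : f (j : ℕ) = -(l2.getD (j : ℕ) 0) := by
      simp [hf, List.getD_eq_getElem l1 0 j.isLt, ← List.get_eq_getElem, hj]
    have hfz : ∀ k ∈ Finset.range n, k ≠ (i : ℕ) → k ≠ (j : ℕ) → f k = 0 := by
      intro k hk hki hkj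
      rw [Finset.mem_range] at hk
      have hk' : k < l1.length := by omega
      have hz0 : l1.get ⟨k, hk'⟩ = 0 := by
        apply huniq
        · intro h; apply hki; rw [← h]
        · intro h; apply hkj; rw [← h]
      have hz : l1.getD k 0 = 0 := by
        rw [List.getD_eq_getElem l1 0 hk']
        exact hz0
      simp only [hf, hz, zero_mul]
    have hine : (i : ℕ) ≠ (j : ℕ) := fun h => hij (Fin.ext h)
    have himem : (i : ℕ) ∈ Finset.range n := by rw [Finset.mem_range]; omega
    have hjmem : (j : ℕ) ∈ Finset.range n := by rw [Finset.mem_range]; omega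
    have hsub : ({(i : ℕ), (j : ℕ)} : Finset ℕ) ⊆ Finset.range n := by
      intro k hk
      simp only [Finset.mem_insert, Finset.mem_singleton] at hk
      rcases hk with rfl | rfl
      exacts [himem, hjmem]
    have hsum2 : ∑ k ∈ Finset.range n, f k = f i + f j := by
      rw [← Finset.sum_subset hsub (fun k hk hk' =>
        hfz k hk (fun h => hk' (by simp [h])) (fun h => hk' (by simp [h])))]
      rw [show ({(i : ℕ), (j : ℕ)} : Finset ℕ) = insert (i : ℕ) {(j : ℕ)} from rfl,
        Finset.sum_insert (by simpa using hine), Finset.sum_singleton]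
    rw [hsum2, hfi, hfj] at hsum
    have heq : l2.getD (i : ℕ) 0 = l2.getD (j : ℕ) 0 := by linear_combination hsum
    have hil : (i : ℕ) < l2.length := by omega
    have hjl : (j : ℕ) < l2.length := by omega
    rw [List.getD_eq_getElem l2 0 hil, List.getD_eq_getElem l2 0 hjl] at heq
    exact hine ((List.Nodup.getElem_inj_iff hnd).mp heq)
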